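/- Let n ≥ 1 be an integer. The complex algebras A = ℂ[x,y,z]/(z·(xⁿ·y − 1) − (x − 1)) and B = ℂ[x₁,x₂,u,w]/(u·x₁ⁿ − (x₂ − 1), w·x₂ − (x₁ − 1)) are isomorphic as ℂ-algebras, via the map sending x₁ ↦ x, x₂ ↦ 1 − xⁿ·y, u ↦ −y, w ↦ −z. -/

import Mathlib

open MvPolynomial

noncomputable section

theorem stmt_0 (n : ℕ) (hn : 1 ≤ n) :
    ∃ e : (MvPolynomial (Fin 4) ℂ ⧸ Ideal.span
        ({X 2 * (X 0) ^ n - (X 1 - 1), X 3 * X 1 - (X 0 - 1)} :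
          Set (MvPolynomial (Fin 4) ℂ))) ≃ₐ[ℂ]
      (MvPolynomial (Fin 3) ℂ ⧸ Ideal.span
        ({X 2 * ((X 0) ^ n * X 1 - 1) - (X 0 - 1)} : Set (MvPolynomial (Fin 3) ℂ))),
      e (Ideal.Quotient.mk _ (X 0)) = Ideal.Quotient.mk _ (X 0) ∧
      e (Ideal.Quotient.mk _ (X 1)) = Ideal.Quotient.mk _ (1 - (X 0) ^ n * X 1) ∧
      e (Ideal.Quotient.mk _ (X 2)) = Ideal.Quotient.mk _ (- X 1) ∧
      e (Ideal.Quotient.mk _ (X 3)) = Ideal.Quotient.mk _ (- X 2) := by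
  set I4 : Ideal (MvPolynomial (Fin 4) ℂ) :=
    Ideal.span ({X 2 * (X 0) ^ n - (X 1 - 1), X 3 * X 1 - (X 0 - 1)} :
      Set (MvPolynomial (Fin 4) ℂ)) with hI4
  set I3 : Ideal (MvPolynomial (Fin 3) ℂ) :=
    Ideal.span ({X 2 * ((X 0) ^ n * X 1 - 1) - (X 0 - 1)} :
      Set (MvPolynomial (Fin 3) ℂ)) with hI3
  let v : Fin 4 → MvPolynomial (Fin 3) ℂ := ![X 0, 1 - (X 0) ^ n * X 1, - X 1, - X 2]
  let w : Fin 3 → MvPolynomial (Fin 4) ℂ := ![X 0, - X 2, - X 3]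
  let f0 : MvPolynomial (Fin 4) ℂ →ₐ[ℂ] MvPolynomial (Fin 3) ℂ ⧸ I3 :=
    (Ideal.Quotient.mkₐ ℂ I3).comp (aeval v)
  let g0 : MvPolynomial (Fin 3) ℂ →ₐ[ℂ] MvPolynomial (Fin 4) ℂ ⧸ I4 :=
    (Ideal.Quotient.mkₐ ℂ I4).comp (aeval w)
  have hv0 : v 0 = X 0 := rfl
  have hv1 : v 1 = 1 - (X 0) ^ n * X 1 := rfl
  have hv2 : v 2 = - X 1 := rfl
  have hv3 : v 3 = - X 2 := rfl
  have hw0 : w 0 = X 0 := rfl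
  have hw1 : w 1 = - X 2 := rfl
  have hw2 : w 2 = - X 3 := rfl
  have hmem1 : (X 2 * (X 0) ^ n - (X 1 - 1) : MvPolynomial (Fin 4) ℂ) ∈ I4 :=
    Ideal.subset_span (Set.mem_insert _ _)
  have hmem2 : (X 3 * X 1 - (X 0 - 1) : MvPolynomial (Fin 4) ℂ) ∈ I4 :=
    Ideal.subset_span (Set.mem_insert_of_mem _ rfl)
  have hmem3 : (X 2 * ((X 0) ^ n * X 1 - 1) - (X 0 - 1) : MvPolynomial (Fin 3) ℂ) ∈ I3 :=
    Ideal.subset_span rfl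
  have hf : ∀ a ∈ I4, f0 a = 0 := by
    intro a ha
    have hle : I4 ≤ RingHom.ker f0 := by
      rw [hI4, Ideal.span_le]
      rintro p hp
      simp only [Set.mem_insert_iff, Set.mem_singleton_iff] at hp
      rw [SetLike.mem_coe, RingHom.mem_ker]
      rcases hp with rfl | rfl
      · show Ideal.Quotient.mk I3
          ((aeval v) (X 2 * (X 0 : MvPolynomial (Fin 4) ℂ) ^ n - (X 1 - 1))) = 0
        have h : (aeval v) (X 2 * (X 0 : MvPolynomial (Fin 4) ℂ) ^ n - (X 1 - 1)) = 0 := by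
          simp only [map_sub, map_mul, map_pow, map_one, aeval_X, hv0, hv1, hv2]
          ring
        rw [h, map_zero]
      · show Ideal.Quotient.mk I3
          ((aeval v) (X 3 * X 1 - ((X 0 : MvPolynomial (Fin 4) ℂ) - 1))) = 0
        have h : (aeval v) (X 3 * X 1 - ((X 0 : MvPolynomial (Fin 4) ℂ) - 1)) =
            X 2 * ((X 0) ^ n * X 1 - 1) - (X 0 - 1) := by
          simp only [map_sub, map_mul, map_pow, map_one, aeval_X, hv0, hv1, hv3]
          ring
        rw [h, Ideal.Quotient.eq_zero_iff_mem]
        exact hmem3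
    exact hle ha
  have hg : ∀ a ∈ I3, g0 a = 0 := by
    intro a ha
    have hle : I3 ≤ RingHom.ker g0 := by
      rw [hI3, Ideal.span_le]
      rintro p hp
      simp only [Set.mem_singleton_iff] at hp
      subst hp
      rw [SetLike.mem_coe, RingHom.mem_ker]
      show Ideal.Quotient.mk I4
        ((aeval w) (X 2 * ((X 0 : MvPolynomial (Fin 3) ℂ) ^ n * X 1 - 1) - (X 0 - 1))) = 0
      have h : (aeval w) (X 2 * ((X 0 : MvPolynomial (Fin 3) ℂ) ^ n * X 1 - 1) - (X 0 - 1)) =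
          X 3 * (X 2 * (X 0) ^ n - (X 1 - 1)) +
            (X 3 * X 1 - ((X 0 : MvPolynomial (Fin 4) ℂ) - 1)) := by
        simp only [map_sub, map_mul, map_pow, map_one, aeval_X, hw0, hw1, hw2]
        ring
      rw [h, Ideal.Quotient.eq_zero_iff_mem]
      exact add_mem (Ideal.mul_mem_left _ _ hmem1) hmem2
    exact hle ha
  let f := Ideal.Quotient.liftₐ I4 f0 hf
  let g := Ideal.Quotient.liftₐ I3 g0 hg
  have hfmk : ∀ p, f (Ideal.Quotient.mk I4 p) = Ideal.Quotient.mk I3 (aeval v p) := by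
    intro p
    simp [f, f0, Ideal.Quotient.liftₐ_apply, Ideal.Quotient.lift_mk]
    rfl
  have hgmk : ∀ p, g (Ideal.Quotient.mk I3 p) = Ideal.Quotient.mk I4 (aeval w p) := by
    intro p
    simp [g, g0, Ideal.Quotient.liftₐ_apply, Ideal.Quotient.lift_mk]
    rfl
  have hfg : f.comp g = AlgHom.id ℂ _ := by
    apply Ideal.Quotient.algHom_ext
    apply MvPolynomial.algHom_ext
    intro i
    fin_cases i
    · show f (g (Ideal.Quotient.mk I3 (X 0))) = Ideal.Quotient.mk I3 (X 0)
      rw [hgmk, aeval_X, hw0, hfmk, aeval_X, hv0]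
    · show f (g (Ideal.Quotient.mk I3 (X 1))) = Ideal.Quotient.mk I3 (X 1)
      rw [hgmk, aeval_X, hw1, hfmk, map_neg, aeval_X, hv2, neg_neg]
    · show f (g (Ideal.Quotient.mk I3 (X 2))) = Ideal.Quotient.mk I3 (X 2)
      rw [hgmk, aeval_X, hw2, hfmk, map_neg, aeval_X, hv3, neg_neg]
  have hgf : g.comp f = AlgHom.id ℂ _ := by
    apply Ideal.Quotient.algHom_ext
    apply MvPolynomial.algHom_ext
    intro i
    fin_cases i
    · show g (f (Ideal.Quotient.mk I4 (X 0))) = Ideal.Quotient.mk I4 (X 0)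
      rw [hfmk, aeval_X, hv0, hgmk, aeval_X, hw0]
    · show g (f (Ideal.Quotient.mk I4 (X 1))) = Ideal.Quotient.mk I4 (X 1)
      rw [hfmk, aeval_X, hv1, hgmk, Ideal.Quotient.eq]
      have h : (aeval w) (1 - (X 0 : MvPolynomial (Fin 3) ℂ) ^ n * X 1) -
          (X 1 : MvPolynomial (Fin 4) ℂ) = X 2 * (X 0) ^ n - (X 1 - 1) := by
        simp only [map_sub, map_mul, map_pow, map_one, aeval_X, hw0, hw1]
        ring
      rw [h]; exact hmem1
    · show g (f (Ideal.Quotient.mk I4 (X 2))) = Ideal.Quotient.mk I4 (X 2)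
      rw [hfmk, aeval_X, hv2, hgmk, map_neg, aeval_X, hw1, neg_neg]
    · show g (f (Ideal.Quotient.mk I4 (X 3))) = Ideal.Quotient.mk I4 (X 3)
      rw [hfmk, aeval_X, hv3, hgmk, map_neg, aeval_X, hw2, neg_neg]
  refine ⟨AlgEquiv.ofAlgHom f g hfg hgf, ?_, ?_, ?_, ?_⟩
  · show f (Ideal.Quotient.mk I4 (X 0)) = _
    rw [hfmk, aeval_X, hv0]
  · show f (Ideal.Quotient.mk I4 (X 1)) = _
    rw [hfmk, aeval_X, hv1]
  · show f (Ideal.Quotient.mk I4 (X 2)) = _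
    rw [hfmk, aeval_X, hv2]
  · show f (Ideal.Quotient.mk I4 (X 3)) = _
    rw [hfmk, aeval_X, hv3]
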